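/- Let λ ≠ 1, let g be a nonzero real constant (the gravitational coupling), let τ_{abc} be a totally antisymmetric real tensor (the totally antisymmetric spin angular momentum), and define f : W₀ → ℝ by f(H) := q(H) − 2g H^{abc} τ_{abc} on the constraint subspace W₀ := {H ∈ W : H_{ijk} = 0 for all i,j,k ∈ {1,2,3}}. Then f has a critical point if and only if Σ_{j=1}^{3} K_{ijj} = 0 for each i ∈ {1,2,3}; and in that case H ∈ W₀ is a critical point of f if and only if H_{0ij} = K_{0ij} + (g/(λ−1)) τ_{0ij} and H_{ij0} = K_{ij0} + (g/(λ−1)) τ_{0ij} for all i,j ∈ {1,2,3}, the components H_{0i0} being arbitrary. -/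
import Mathlib


open Finset

noncomputable section

/- Index set {0,1,2,3}. -/
abbrev Idx := Fin 4

/-- The Minkowski metric η_{ab} = diag(−1,1,1,1) (which equals its inverse η^{ab}). -/
def ηm (a b : Idx) : ℝ := if a = b then (if a = (0 : Idx) then -1 else 1) else 0

/- Rank-3 tensors H_{abc} (all indices lowered). -/
abbrev T3 := Idx → Idx → Idx → ℝ

/-- Raising all three indices: H^{abc} = η^{aa'} η^{bb'} η^{cc'} H_{a'b'c'}. -/
def up3 (H : T3) (a b c : Idx) : ℝ :=
  ∑ a', ∑ b', ∑ c', ηm a a' * ηm b b' * ηm c c' * H a' b' c'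

/-- Total antisymmetrization H_{[abc]} with weight 1/3!. -/
def asym (H : T3) (a b c : Idx) : ℝ :=
  (H a b c - H a c b + H b c a - H b a c + H c a b - H c b a) / 6

/-- The contraction H^a{}_{ca} (free index c): η^{aa'} H_{a'ca}. -/
def tr1 (H : T3) (c : Idx) : ℝ := ∑ a, ∑ a', ηm a a' * H a' c a

/-- The contraction H^{cb}{}_b (free index c): η^{cc'} η^{bb'} H_{c'b'b}. -/
def tr2 (H : T3) (c : Idx) : ℝ := ∑ b, ∑ c', ∑ b', ηm c c' * ηm b b' * H c' b' b

/-- The quadratic functional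
`q(H) = H^{abc}(H_{cba} − 2K_{cba}) + H^a{}_{ca}(H^{cb}{}_b − 2K^{cb}{}_b)
        + λ H^{[abc]}(H_{[abc]} − 2K_{[abc]})`. -/
def qfun (lam : ℝ) (K H : T3) : ℝ :=
  (∑ a, ∑ b, ∑ c, up3 H a b c * (H c b a - 2 * K c b a))
  + (∑ c, tr1 H c * (tr2 H c - 2 * tr2 K c))
  + lam * ∑ a, ∑ b, ∑ c,
      up3 (fun x y z => asym H x y z) a b c * (asym H a b c - 2 * asym K a b c)

/-- `W`: the space of rank-3 tensors antisymmetric in their first two indices. -/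
def Wsub : Submodule ℝ T3 where
  carrier := {H | ∀ a b c, H a b c = -H b a c}
  add_mem' := by
    intro x y hx hy a b c
    simp only [Pi.add_apply]
    rw [hx a b c, hy a b c]; ring
  zero_mem' := by intro a b c; simp
  smul_mem' := by
    intro r x hx a b c
    simp only [Pi.smul_apply, smul_eq_mul]
    rw [hx a b c]; ring

/-- `W₀`: the semi-teleparallel constraint subspace of `W`, consisting of tensors
antisymmetric in their first two indices whose purely spatial components vanish
(`H_{ijk} = 0` for `i,j,k ∈ {1,2,3}`). -/
def W0 : Submodule ℝ T3 where
  carrier := {H | (∀ a b c, H a b c = -H b a c) ∧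
    ∀ i j k : Fin 3, H i.succ j.succ k.succ = 0}
  add_mem' := by
    intro x y hx hy
    constructor
    · intro a b c
      simp only [Pi.add_apply]
      rw [hx.1 a b c, hy.1 a b c]; ring
    · intro i j k
      simp only [Pi.add_apply]
      rw [hx.2 i j k, hy.2 i j k]; ring
  zero_mem' := by
    constructor
    · intro a b c; simp
    · intro i j k; simp
  smul_mem' := by
    intro r x hx
    constructor
    · intro a b c
      simp only [Pi.smul_apply, smul_eq_mul]
      rw [hx.1 a b c]; ring
    · intro i j k
      simp only [Pi.smul_apply, smul_eq_mul]
      rw [hx.2 i j k]; ring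



/-! ### Auxiliary machinery for the proof of `statement17` -/

lemma sum_eta (a : Idx) (f : Idx → ℝ) : (∑ x, ηm a x * f x) = ηm a a * f a := by
  rw [Finset.sum_eq_single a]
  · intro b _ hb
    have hzero : ηm a b = 0 := by
      simp only [ηm]; rw [if_neg (fun h => hb h.symm)]
    rw [hzero, zero_mul]
  · intro h; exact absurd (Finset.mem_univ a) h

lemma up3_eq (X : T3) (a b c : Idx) :
    up3 X a b c = ηm a a * (ηm b b * (ηm c c * X a b c)) := by
  simp only [up3, mul_assoc, ← Finset.mul_sum, sum_eta]

lemma tr1_eq (X : T3) (c : Idx) : tr1 X c = ∑ a, ηm a a * X a c a := by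
  simp only [tr1, sum_eta]

lemma tr2_eq (X : T3) (c : Idx) : tr2 X c = ∑ b, ηm c c * (ηm b b * X c b b) := by
  simp only [tr2, mul_assoc, ← Finset.mul_sum, sum_eta]

lemma eta00 : ηm 0 0 = -1 := by simp [ηm]
lemma eta11 : ηm 1 1 = 1 := by simp [ηm]
lemma eta22 : ηm 2 2 = 1 := by simp [ηm]
lemma eta33 : ηm 3 3 = 1 := by simp [ηm]

lemma fs0 : (0 : Fin 3).succ = (1 : Idx) := rfl
lemma fs1 : (1 : Fin 3).succ = (2 : Idx) := rfl
lemma fs2 : (2 : Fin 3).succ = (3 : Idx) := rfl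

def P1 (A C : T3) : ℝ := ∑ a, ∑ b, ∑ c, up3 A a b c * C c b a
def P2 (A C : T3) : ℝ := ∑ c, tr1 A c * tr2 C c
def P3 (A C : T3) : ℝ :=
  ∑ a, ∑ b, ∑ c, up3 (fun x y z => asym A x y z) a b c * asym C a b c
def Bf (lam : ℝ) (A C : T3) : ℝ := P1 A C + P2 A C + lam * P3 A C
def Sf (τ A : T3) : ℝ := ∑ a, ∑ b, ∑ c, up3 A a b c * τ a b c
def DV (lam g : ℝ) (K τ H v : T3) : ℝ :=
  Bf lam H v + Bf lam v H - 2 * Bf lam v K - 2 * g * Sf τ v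

lemma sum3_congr {f g : Idx → Idx → Idx → ℝ} (h : ∀ a b c, f a b c = g a b c) :
    (∑ a, ∑ b, ∑ c, f a b c) = ∑ a, ∑ b, ∑ c, g a b c :=
  Finset.sum_congr rfl fun a _ => Finset.sum_congr rfl fun b _ =>
    Finset.sum_congr rfl fun c _ => h a b c
lemma sum3_add (f g : Idx → Idx → Idx → ℝ) :
    (∑ a, ∑ b, ∑ c, (f a b c + g a b c))
      = (∑ a, ∑ b, ∑ c, f a b c) + (∑ a, ∑ b, ∑ c, g a b c) := by
  simp [Finset.sum_add_distrib]
lemma sum3_sub (f g : Idx → Idx → Idx → ℝ) :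
    (∑ a, ∑ b, ∑ c, (f a b c - g a b c))
      = (∑ a, ∑ b, ∑ c, f a b c) - (∑ a, ∑ b, ∑ c, g a b c) := by
  simp [Finset.sum_sub_distrib]
lemma sum3_mul (r : ℝ) (f : Idx → Idx → Idx → ℝ) :
    (∑ a, ∑ b, ∑ c, r * f a b c) = r * ∑ a, ∑ b, ∑ c, f a b c := by
  simp [Finset.mul_sum]
lemma sum1_add (f g : Idx → ℝ) : (∑ c, (f c + g c)) = (∑ c, f c) + ∑ c, g c := by
  simp [Finset.sum_add_distrib]
lemma sum1_sub (f g : Idx → ℝ) : (∑ c, (f c - g c)) = (∑ c, f c) - ∑ c, g c := by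
  simp [Finset.sum_sub_distrib]
lemma sum1_mul (r : ℝ) (f : Idx → ℝ) : (∑ c, r * f c) = r * ∑ c, f c := by
  simp [Finset.mul_sum]

lemma sum3_split (x y z : Idx → Idx → Idx → ℝ) :
    (∑ a, ∑ b, ∑ c, x a b c * (y a b c - 2 * z a b c))
      = (∑ a, ∑ b, ∑ c, x a b c * y a b c) - 2 * ∑ a, ∑ b, ∑ c, x a b c * z a b c := by
  rw [← sum3_mul, ← sum3_sub]; exact sum3_congr fun a b c => by ring
lemma sum1_split (x y z : Idx → ℝ) :
    (∑ c, x c * (y c - 2 * z c)) = (∑ c, x c * y c) - 2 * ∑ c, x c * z c := by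
  rw [← sum1_mul, ← sum1_sub]; exact Finset.sum_congr rfl fun c _ => by ring

lemma asym_add (A B : T3) (a b c : Idx) :
    asym (A + B) a b c = asym A a b c + asym B a b c := by
  simp only [asym, Pi.add_apply]; ring
lemma asym_smul (r : ℝ) (A : T3) (a b c : Idx) :
    asym (r • A) a b c = r * asym A a b c := by
  simp only [asym, Pi.smul_apply, smul_eq_mul]; ring
lemma tr1_add (A B : T3) (c : Idx) : tr1 (A + B) c = tr1 A c + tr1 B c := by
  simp only [tr1_eq, Pi.add_apply, mul_add, Finset.sum_add_distrib]
lemma tr1_smul (r : ℝ) (A : T3) (c : Idx) : tr1 (r • A) c = r * tr1 A c := by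
  rw [tr1_eq, tr1_eq, Finset.mul_sum]
  exact Finset.sum_congr rfl fun a _ => by simp [Pi.smul_apply]; ring
lemma tr2_add (A B : T3) (c : Idx) : tr2 (A + B) c = tr2 A c + tr2 B c := by
  simp only [tr2_eq, Pi.add_apply, mul_add, Finset.sum_add_distrib]
lemma tr2_smul (r : ℝ) (A : T3) (c : Idx) : tr2 (r • A) c = r * tr2 A c := by
  rw [tr2_eq, tr2_eq, Finset.mul_sum]
  exact Finset.sum_congr rfl fun a _ => by simp [Pi.smul_apply]; ring

lemma P1_add_left (A B C : T3) : P1 (A + B) C = P1 A C + P1 B C := by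
  rw [P1, P1, P1, ← sum3_add]
  exact sum3_congr fun a b c => by simp only [up3_eq, Pi.add_apply]; ring
lemma P1_smul_left (r : ℝ) (A C : T3) : P1 (r • A) C = r * P1 A C := by
  rw [P1, P1, ← sum3_mul]
  exact sum3_congr fun a b c => by simp only [up3_eq, Pi.smul_apply, smul_eq_mul]; ring
lemma P1_add_right (A C D : T3) : P1 A (C + D) = P1 A C + P1 A D := by
  rw [P1, P1, P1, ← sum3_add]
  exact sum3_congr fun a b c => by simp only [Pi.add_apply]; ring
lemma P1_smul_right (r : ℝ) (A C : T3) : P1 A (r • C) = r * P1 A C := by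
  rw [P1, P1, ← sum3_mul]
  exact sum3_congr fun a b c => by simp only [Pi.smul_apply, smul_eq_mul]; ring
lemma P2_add_left (A B C : T3) : P2 (A + B) C = P2 A C + P2 B C := by
  rw [P2, P2, P2, ← sum1_add]
  exact Finset.sum_congr rfl fun c _ => by rw [tr1_add]; ring
lemma P2_smul_left (r : ℝ) (A C : T3) : P2 (r • A) C = r * P2 A C := by
  rw [P2, P2, ← sum1_mul]
  exact Finset.sum_congr rfl fun c _ => by rw [tr1_smul]; ring
lemma P2_add_right (A C D : T3) : P2 A (C + D) = P2 A C + P2 A D := by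
  rw [P2, P2, P2, ← sum1_add]
  exact Finset.sum_congr rfl fun c _ => by rw [tr2_add]; ring
lemma P2_smul_right (r : ℝ) (A C : T3) : P2 A (r • C) = r * P2 A C := by
  rw [P2, P2, ← sum1_mul]
  exact Finset.sum_congr rfl fun c _ => by rw [tr2_smul]; ring
lemma P3_add_left (A B C : T3) : P3 (A + B) C = P3 A C + P3 B C := by
  rw [P3, P3, P3, ← sum3_add]
  exact sum3_congr fun a b c => by simp only [up3_eq, asym_add]; ring
lemma P3_smul_left (r : ℝ) (A C : T3) : P3 (r • A) C = r * P3 A C := by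
  rw [P3, P3, ← sum3_mul]
  exact sum3_congr fun a b c => by simp only [up3_eq, asym_smul]; ring
lemma P3_add_right (A C D : T3) : P3 A (C + D) = P3 A C + P3 A D := by
  rw [P3, P3, P3, ← sum3_add]
  exact sum3_congr fun a b c => by simp only [asym_add]; ring
lemma P3_smul_right (r : ℝ) (A C : T3) : P3 A (r • C) = r * P3 A C := by
  rw [P3, P3, ← sum3_mul]
  exact sum3_congr fun a b c => by simp only [asym_smul]; ring
lemma Sf_add (τ : T3) (A B : T3) : Sf τ (A + B) = Sf τ A + Sf τ B := by
  rw [Sf, Sf, Sf, ← sum3_add]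
  exact sum3_congr fun a b c => by simp only [up3_eq, Pi.add_apply]; ring
lemma Sf_smul (τ : T3) (r : ℝ) (A : T3) : Sf τ (r • A) = r * Sf τ A := by
  rw [Sf, Sf, ← sum3_mul]
  exact sum3_congr fun a b c => by simp only [up3_eq, Pi.smul_apply, smul_eq_mul]; ring

lemma Bf_add_left (lam : ℝ) (A B C : T3) : Bf lam (A + B) C = Bf lam A C + Bf lam B C := by
  simp only [Bf, P1_add_left, P2_add_left, P3_add_left]; ring
lemma Bf_smul_left (lam r : ℝ) (A C : T3) : Bf lam (r • A) C = r * Bf lam A C := by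
  simp only [Bf, P1_smul_left, P2_smul_left, P3_smul_left]; ring
lemma Bf_add_right (lam : ℝ) (A C D : T3) : Bf lam A (C + D) = Bf lam A C + Bf lam A D := by
  simp only [Bf, P1_add_right, P2_add_right, P3_add_right]; ring
lemma Bf_smul_right (lam r : ℝ) (A C : T3) : Bf lam A (r • C) = r * Bf lam A C := by
  simp only [Bf, P1_smul_right, P2_smul_right, P3_smul_right]; ring

lemma qfun_eq (lam : ℝ) (K H : T3) : qfun lam K H = Bf lam H H - 2 * Bf lam H K := by
  unfold qfun Bf P1 P2 P3
  rw [sum3_split, sum1_split, sum3_split]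
  ring

def Blm (lam : ℝ) : T3 →ₗ[ℝ] T3 →ₗ[ℝ] ℝ :=
  LinearMap.mk₂ ℝ (Bf lam) (Bf_add_left lam)
    (fun r A C => by rw [smul_eq_mul]; exact Bf_smul_left lam r A C)
    (Bf_add_right lam)
    (fun r A C => by rw [smul_eq_mul]; exact Bf_smul_right lam r A C)

def Bc (lam : ℝ) : T3 →L[ℝ] T3 →L[ℝ] ℝ :=
  LinearMap.toContinuousLinearMap
    { toFun := fun A => LinearMap.toContinuousLinearMap (Blm lam A)
      map_add' := fun A B => by ext C; simp [map_add]
      map_smul' := fun r A => by ext C; simp }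

lemma Bc_apply (lam : ℝ) (A C : T3) : Bc lam A C = Bf lam A C := by
  simp [Bc, LinearMap.coe_toContinuousLinearMap', Blm]

def Llm (lam g : ℝ) (K τ : T3) : T3 →ₗ[ℝ] ℝ where
  toFun := fun v => -2 * Bf lam v K - 2 * g * Sf τ v
  map_add' := fun A B => by
    show -2 * Bf lam (A + B) K - 2 * g * Sf τ (A + B)
      = (-2 * Bf lam A K - 2 * g * Sf τ A) + (-2 * Bf lam B K - 2 * g * Sf τ B)
    rw [Bf_add_left, Sf_add]; ring
  map_smul' := fun r A => by
    show -2 * Bf lam (r • A) K - 2 * g * Sf τ (r • A)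
      = r • (-2 * Bf lam A K - 2 * g * Sf τ A)
    rw [Bf_smul_left, Sf_smul, smul_eq_mul]; ring

def Lc (lam g : ℝ) (K τ : T3) : T3 →L[ℝ] ℝ :=
  LinearMap.toContinuousLinearMap (Llm lam g K τ)

lemma Lc_apply (lam g : ℝ) (K τ v : T3) :
    Lc lam g K τ v = -2 * Bf lam v K - 2 * g * Sf τ v := by
  simp [Lc, LinearMap.coe_toContinuousLinearMap', Llm]

lemma crit_iff (lam g : ℝ) (K τ : T3) (H : W0) :
    (fderiv ℝ (fun H : W0 =>
        qfun lam K (H : T3) - 2 * g * ∑ a, ∑ b, ∑ c, up3 (H : T3) a b c * τ a b c) H = 0) ↔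
      ∀ v : W0, DV lam g K τ (H : T3) (v : T3) = 0 := by
  have hfun : (fun H : W0 =>
      qfun lam K (H : T3) - 2 * g * ∑ a, ∑ b, ∑ c, up3 (H : T3) a b c * τ a b c)
      = fun X : W0 => Bc lam (X : T3) (X : T3) + Lc lam g K τ (X : T3) := by
    funext X
    rw [qfun_eq, Bc_apply, Lc_apply]
    have hsf : (∑ a, ∑ b, ∑ c, up3 (X : T3) a b c * τ a b c) = Sf τ (X : T3) := rfl
    rw [hsf]; ring
  rw [hfun]
  set D : W0 →L[ℝ] ℝ :=
    (((Bc lam).isBoundedBilinearMap.deriv ((H : T3), (H : T3))).comp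
      (W0.subtypeL.prod W0.subtypeL)) + (Lc lam g K τ).comp W0.subtypeL with hD
  have hd : HasFDerivAt (fun X : W0 => Bc lam (X : T3) (X : T3) + Lc lam g K τ (X : T3)) D H := by
    have h1 := (Bc lam).isBoundedBilinearMap.hasFDerivAt ((H : T3), (H : T3))
    have h2 : HasFDerivAt (fun X : W0 => ((X : T3), (X : T3)))
        (W0.subtypeL.prod W0.subtypeL) H := (W0.subtypeL.prod W0.subtypeL).hasFDerivAt
    have h3 := h1.comp H h2
    have h4 : HasFDerivAt (fun X : W0 => Lc lam g K τ (X : T3))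
        ((Lc lam g K τ).comp W0.subtypeL) H := ((Lc lam g K τ).comp W0.subtypeL).hasFDerivAt
    exact h3.add h4
  rw [hd.fderiv, ContinuousLinearMap.ext_iff]
  refine forall_congr' fun v => ?_
  have hDv : D v = DV lam g K τ (H : T3) (v : T3) := by
    simp only [hD, ContinuousLinearMap.add_apply, ContinuousLinearMap.comp_apply,
      ContinuousLinearMap.prod_apply, IsBoundedBilinearMap.deriv_apply,
      Submodule.coe_subtypeL', Submodule.subtype_apply, Bc_apply, Lc_apply, DV]
    ring
  rw [hDv, ContinuousLinearMap.zero_apply]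

def CM1 (lam g : ℝ) (K τ H : T3) : ℝ := 2 * K 1 2 2 + 2 * K 1 3 3
def CE11 (lam g : ℝ) (K τ H : T3) : ℝ := 2 * H 0 2 2 + 2 * H 0 3 3 + (-2) * K 0 2 2 + (-2) * K 0 3 3
def CE12 (lam g : ℝ) (K τ H : T3) : ℝ := 4 * g * τ 0 1 2 + (-4/3) * H 0 1 2 * lam + (-2) * H 0 2 1 + (4/3) * H 0 2 1 * lam + 2 * H 1 2 0 + (-4/3) * H 1 2 0 * lam + (4/3) * K 0 1 2 * lam + 2 * K 0 2 1 + (-4/3) * K 0 2 1 * lam + (-2) * K 1 2 0 + (4/3) * K 1 2 0 * lam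
def CE13 (lam g : ℝ) (K τ H : T3) : ℝ := 4 * g * τ 0 1 3 + (-4/3) * H 0 1 3 * lam + (-2) * H 0 3 1 + (4/3) * H 0 3 1 * lam + 2 * H 1 3 0 + (-4/3) * H 1 3 0 * lam + (4/3) * K 0 1 3 * lam + 2 * K 0 3 1 + (-4/3) * K 0 3 1 * lam + (-2) * K 1 3 0 + (4/3) * K 1 3 0 * lam
def CM2 (lam g : ℝ) (K τ H : T3) : ℝ := (-2) * K 1 2 1 + 2 * K 2 3 3
def CE21 (lam g : ℝ) (K τ H : T3) : ℝ := (-4) * g * τ 0 1 2 + (-2) * H 0 1 2 + (4/3) * H 0 1 2 * lam + (-4/3) * H 0 2 1 * lam + (-2) * H 1 2 0 + (4/3) * H 1 2 0 * lam + 2 * K 0 1 2 + (-4/3) * K 0 1 2 * lam + (4/3) * K 0 2 1 * lam + 2 * K 1 2 0 + (-4/3) * K 1 2 0 * lam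
def CE22 (lam g : ℝ) (K τ H : T3) : ℝ := 2 * H 0 1 1 + 2 * H 0 3 3 + (-2) * K 0 1 1 + (-2) * K 0 3 3
def CE23 (lam g : ℝ) (K τ H : T3) : ℝ := 4 * g * τ 0 2 3 + (-4/3) * H 0 2 3 * lam + (-2) * H 0 3 2 + (4/3) * H 0 3 2 * lam + 2 * H 2 3 0 + (-4/3) * H 2 3 0 * lam + (4/3) * K 0 2 3 * lam + 2 * K 0 3 2 + (-4/3) * K 0 3 2 * lam + (-2) * K 2 3 0 + (4/3) * K 2 3 0 * lam
def CM3 (lam g : ℝ) (K τ H : T3) : ℝ := (-2) * K 1 3 1 + (-2) * K 2 3 2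
def CE31 (lam g : ℝ) (K τ H : T3) : ℝ := (-4) * g * τ 0 1 3 + (-2) * H 0 1 3 + (4/3) * H 0 1 3 * lam + (-4/3) * H 0 3 1 * lam + (-2) * H 1 3 0 + (4/3) * H 1 3 0 * lam + 2 * K 0 1 3 + (-4/3) * K 0 1 3 * lam + (4/3) * K 0 3 1 * lam + 2 * K 1 3 0 + (-4/3) * K 1 3 0 * lam
def CE32 (lam g : ℝ) (K τ H : T3) : ℝ := (-4) * g * τ 0 2 3 + (-2) * H 0 2 3 + (4/3) * H 0 2 3 * lam + (-4/3) * H 0 3 2 * lam + (-2) * H 2 3 0 + (4/3) * H 2 3 0 * lam + 2 * K 0 2 3 + (-4/3) * K 0 2 3 * lam + (4/3) * K 0 3 2 * lam + 2 * K 2 3 0 + (-4/3) * K 2 3 0 * lam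
def CE33 (lam g : ℝ) (K τ H : T3) : ℝ := 2 * H 0 1 1 + 2 * H 0 2 2 + (-2) * K 0 1 1 + (-2) * K 0 2 2
def CB12 (lam g : ℝ) (K τ H : T3) : ℝ := 4 * g * τ 0 1 2 + 2 * H 0 1 2 + (-4/3) * H 0 1 2 * lam + (-2) * H 0 2 1 + (4/3) * H 0 2 1 * lam + (-4/3) * H 1 2 0 * lam + (-2) * K 0 1 2 + (4/3) * K 0 1 2 * lam + 2 * K 0 2 1 + (-4/3) * K 0 2 1 * lam + (4/3) * K 1 2 0 * lam
def CB13 (lam g : ℝ) (K τ H : T3) : ℝ := 4 * g * τ 0 1 3 + 2 * H 0 1 3 + (-4/3) * H 0 1 3 * lam + (-2) * H 0 3 1 + (4/3) * H 0 3 1 * lam + (-4/3) * H 1 3 0 * lam + (-2) * K 0 1 3 + (4/3) * K 0 1 3 * lam + 2 * K 0 3 1 + (-4/3) * K 0 3 1 * lam + (4/3) * K 1 3 0 * lam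
def CB23 (lam g : ℝ) (K τ H : T3) : ℝ := 4 * g * τ 0 2 3 + 2 * H 0 2 3 + (-4/3) * H 0 2 3 * lam + (-2) * H 0 3 2 + (4/3) * H 0 3 2 * lam + (-4/3) * H 2 3 0 * lam + (-2) * K 0 2 3 + (4/3) * K 0 2 3 * lam + 2 * K 0 3 2 + (-4/3) * K 0 3 2 * lam + (4/3) * K 2 3 0 * lam

def Eqs (lam g : ℝ) (K τ H : T3) : Prop :=
  CM1 lam g K τ H = 0 ∧
  CE11 lam g K τ H = 0 ∧
  CE12 lam g K τ H = 0 ∧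
  CE13 lam g K τ H = 0 ∧
  CM2 lam g K τ H = 0 ∧
  CE21 lam g K τ H = 0 ∧
  CE22 lam g K τ H = 0 ∧
  CE23 lam g K τ H = 0 ∧
  CM3 lam g K τ H = 0 ∧
  CE31 lam g K τ H = 0 ∧
  CE32 lam g K τ H = 0 ∧
  CE33 lam g K τ H = 0 ∧
  CB12 lam g K τ H = 0 ∧
  CB13 lam g K τ H = 0 ∧
  CB23 lam g K τ H = 0

lemma asym_eq {X : T3} (h : ∀ a b c, X a b c = -X b a c) (a b c : Idx) :
    asym X a b c = (X a b c + X b c a + X c a b)/3 := by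
  simp only [asym]; rw [h a c b, h b a c, h c b a]; ring

lemma Dval (lam g : ℝ) (K τ H v : T3)
    (hK : ∀ a b c, K a b c = -K b a c)
    (hτ1 : ∀ a b c, τ a b c = -τ b a c) (hτ2 : ∀ a b c, τ a b c = -τ a c b)
    (hH1 : ∀ a b c, H a b c = -H b a c) (hH2 : ∀ i j k : Fin 3, H i.succ j.succ k.succ = 0)
    (hv1 : ∀ a b c, v a b c = -v b a c) (hv2 : ∀ i j k : Fin 3, v i.succ j.succ k.succ = 0) :
    DV lam g K τ H v
      = v 0 1 0 * CM1 lam g K τ H + v 0 1 1 * CE11 lam g K τ H + v 0 1 2 * CE12 lam g K τ H + v 0 1 3 * CE13 lam g K τ H + v 0 2 0 * CM2 lam g K τ H + v 0 2 1 * CE21 lam g K τ H + v 0 2 2 * CE22 lam g K τ H + v 0 2 3 * CE23 lam g K τ H + v 0 3 0 * CM3 lam g K τ H + v 0 3 1 * CE31 lam g K τ H + v 0 3 2 * CE32 lam g K τ H + v 0 3 3 * CE33 lam g K τ H + v 1 2 0 * CB12 lam g K τ H + v 1 3 0 * CB13 lam g K τ H + v 2 3 0 * CB23 lam g K τ H :=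 by
  have hHd : ∀ a c, H a a c = 0 := fun a c => by have := hH1 a a c; linarith
  have sH121 : H 1 2 1 = 0 := hH2 0 1 0
  have sH122 : H 1 2 2 = 0 := hH2 0 1 1
  have sH123 : H 1 2 3 = 0 := hH2 0 1 2
  have sH131 : H 1 3 1 = 0 := hH2 0 2 0
  have sH132 : H 1 3 2 = 0 := hH2 0 2 1
  have sH133 : H 1 3 3 = 0 := hH2 0 2 2
  have sH231 : H 2 3 1 = 0 := hH2 1 2 0
  have sH232 : H 2 3 2 = 0 := hH2 1 2 1
  have sH233 : H 2 3 3 = 0 := hH2 1 2 2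
  have hvd : ∀ a c, v a a c = 0 := fun a c => by have := hv1 a a c; linarith
  have sv121 : v 1 2 1 = 0 := hv2 0 1 0
  have sv122 : v 1 2 2 = 0 := hv2 0 1 1
  have sv123 : v 1 2 3 = 0 := hv2 0 1 2
  have sv131 : v 1 3 1 = 0 := hv2 0 2 0
  have sv132 : v 1 3 2 = 0 := hv2 0 2 1
  have sv133 : v 1 3 3 = 0 := hv2 0 2 2
  have sv231 : v 2 3 1 = 0 := hv2 1 2 0
  have sv232 : v 2 3 2 = 0 := hv2 1 2 1
  have sv233 : v 2 3 3 = 0 := hv2 1 2 2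
  have hKd : ∀ a c, K a a c = 0 := fun a c => by have := hK a a c; linarith
  have hτd1 : ∀ a c, τ a a c = 0 := fun a c => by have := hτ1 a a c; linarith
  have hτd2 : ∀ a b, τ a b b = 0 := fun a b => by have := hτ2 a b b; linarith
  have ht10 : ∀ a, τ a 1 0 = -τ a 0 1 := fun a => hτ2 a 1 0
  have ht20 : ∀ a, τ a 2 0 = -τ a 0 2 := fun a => hτ2 a 2 0
  have ht30 : ∀ a, τ a 3 0 = -τ a 0 3 := fun a => hτ2 a 3 0
  have ht21 : ∀ a, τ a 2 1 = -τ a 1 2 := fun a => hτ2 a 2 1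
  have ht31 : ∀ a, τ a 3 1 = -τ a 1 3 := fun a => hτ2 a 3 1
  have ht32 : ∀ a, τ a 3 2 = -τ a 2 3 := fun a => hτ2 a 3 2
  have A1 : P1 H v = 1 * H 0 1 0 * v 0 1 0 + (-1) * H 0 1 1 * v 0 1 1 + (-1) * H 0 1 2 * v 0 2 1 + 1 * H 0 1 2 * v 1 2 0 + (-1) * H 0 1 3 * v 0 3 1 + 1 * H 0 1 3 * v 1 3 0 + 1 * H 0 2 0 * v 0 2 0 + (-1) * H 0 2 1 * v 0 1 2 + (-1) * H 0 2 1 * v 1 2 0 + (-1) * H 0 2 2 * v 0 2 2 + (-1) * H 0 2 3 * v 0 3 2 + 1 * H 0 2 3 * v 2 3 0 + 1 * H 0 3 0 * v 0 3 0 + (-1) * H 0 3 1 * v 0 1 3 + (-1) * H 0 3 1 * v 1 3 0 + (-1) * H 0 3 2 * v 0 2 3 + (-1) * H 0 3 2 * v 2 3 0 + (-1) * H 0 3 3 * v 0 3 3 + 1 * H 1 2 0 * v 0 1 2 + (-1) * H 1 2 0 * v 0 2 1 + 1 * H 1 3 0 * v 0 1 3 + (-1) * H 1 3 0 * v 0 3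 1 + 1 * H 2 3 0 * v 0 2 3 + (-1) * H 2 3 0 * v 0 3 2 := by
    simp only [P1, up3_eq, Fin.sum_univ_four, eta00, eta11, eta22, eta33, hHd, hH1 1 0, hH1 2 0, hH1 3 0, hH1 2 1, hH1 3 1, hH1 3 2, sH121, sH122, sH123, sH131, sH132, sH133, sH231, sH232, sH233, hvd, hv1 1 0, hv1 2 0, hv1 3 0, hv1 2 1, hv1 3 1, hv1 3 2, sv121, sv122, sv123, sv131, sv132, sv133, sv231, sv232, sv233]
    ring
  have A2 : P1 v H = 1 * H 0 1 0 * v 0 1 0 + (-1) * H 0 1 1 * v 0 1 1 + (-1) * H 0 1 2 * v 0 2 1 + 1 * H 0 1 2 * v 1 2 0 + (-1) * H 0 1 3 * v 0 3 1 + 1 * H 0 1 3 * v 1 3 0 + 1 * H 0 2 0 * v 0 2 0 + (-1) * H 0 2 1 * v 0 1 2 + (-1) * H 0 2 1 * v 1 2 0 + (-1) * H 0 2 2 * v 0 2 2 + (-1) * H 0 2 3 * v 0 3 2 + 1 * H 0 2 3 * v 2 3 0 + 1 * H 0 3 0 * v 0 3 0 + (-1) * H 0 3 1 * v 0 1 3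 + (-1) * H 0 3 1 * v 1 3 0 + (-1) * H 0 3 2 * v 0 2 3 + (-1) * H 0 3 2 * v 2 3 0 + (-1) * H 0 3 3 * v 0 3 3 + 1 * H 1 2 0 * v 0 1 2 + (-1) * H 1 2 0 * v 0 2 1 + 1 * H 1 3 0 * v 0 1 3 + (-1) * H 1 3 0 * v 0 3 1 + 1 * H 2 3 0 * v 0 2 3 + (-1) * H 2 3 0 * v 0 3 2 := by
    simp only [P1, up3_eq, Fin.sum_univ_four, eta00, eta11, eta22, eta33, hHd, hH1 1 0, hH1 2 0, hH1 3 0, hH1 2 1, hH1 3 1, hH1 3 2, sH121, sH122, sH123, sH131, sH132, sH133, sH231, sH232, sH233, hvd, hv1 1 0, hv1 2 0, hv1 3 0, hv1 2 1, hv1 3 1, hv1 3 2, sv121, sv122, sv123, sv131, sv132, sv133, sv231, sv232, sv233]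
    ring
  have A3 : P2 H v = (-1) * H 0 1 0 * v 0 1 0 + 1 * H 0 1 1 * v 0 1 1 + 1 * H 0 1 1 * v 0 2 2 + 1 * H 0 1 1 * v 0 3 3 + (-1) * H 0 2 0 * v 0 2 0 + 1 * H 0 2 2 * v 0 1 1 + 1 * H 0 2 2 * v 0 2 2 + 1 * H 0 2 2 * v 0 3 3 + (-1) * H 0 3 0 * v 0 3 0 + 1 * H 0 3 3 * v 0 1 1 + 1 * H 0 3 3 * v 0 2 2 + 1 * H 0 3 3 * v 0 3 3 := by
    simp only [P2, tr1_eq, tr2_eq, Fin.sum_univ_four, eta00, eta11, eta22, eta33, hHd, hH1 1 0, hH1 2 0, hH1 3 0, hH1 2 1, hH1 3 1, hH1 3 2, sH121, sH122, sH123, sH131, sH132, sH133, sH231, sH232, sH233, hvd, hv1 1 0, hv1 2 0, hv1 3 0, hv1 2 1, hv1 3 1, hv1 3 2, sv121, sv122, sv123, sv131, sv132, sv133, sv231, sv232, sv233]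
    ring
  have A4 : P2 v H = (-1) * H 0 1 0 * v 0 1 0 + 1 * H 0 1 1 * v 0 1 1 + 1 * H 0 1 1 * v 0 2 2 + 1 * H 0 1 1 * v 0 3 3 + (-1) * H 0 2 0 * v 0 2 0 + 1 * H 0 2 2 * v 0 1 1 + 1 * H 0 2 2 * v 0 2 2 + 1 * H 0 2 2 * v 0 3 3 + (-1) * H 0 3 0 * v 0 3 0 + 1 * H 0 3 3 * v 0 1 1 + 1 * H 0 3 3 * v 0 2 2 + 1 * H 0 3 3 * v 0 3 3 := by
    simp only [P2, tr1_eq, tr2_eq, Fin.sum_univ_four, eta00, eta11, eta22, eta33, hHd, hH1 1 0, hH1 2 0, hH1 3 0, hH1 2 1, hH1 3 1, hH1 3 2, sH121, sH122, sH123, sH131, sH132, sH133, sH231, sH232, sH233, hvd, hv1 1 0, hv1 2 0, hv1 3 0, hv1 2 1, hv1 3 1, hv1 3 2, sv121, sv122, sv123, sv131, sv132, sv133, sv231, sv232, sv233]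
    ring
  have A5 : P3 H v = (-2/3) * H 0 1 2 * v 0 1 2 + (2/3) * H 0 1 2 * v 0 2 1 + (-2/3) * H 0 1 2 * v 1 2 0 + (-2/3) * H 0 1 3 * v 0 1 3 + (2/3) * H 0 1 3 * v 0 3 1 + (-2/3) * H 0 1 3 * v 1 3 0 + (2/3) * H 0 2 1 * v 0 1 2 + (-2/3) * H 0 2 1 * v 0 2 1 + (2/3) * H 0 2 1 * v 1 2 0 + (-2/3) * H 0 2 3 * v 0 2 3 + (2/3) * H 0 2 3 * v 0 3 2 + (-2/3) * H 0 2 3 * v 2 3 0 + (2/3) * H 0 3 1 * v 0 1 3 + (-2/3) * H 0 3 1 * v 0 3 1 + (2/3) * H 0 3 1 * v 1 3 0 + (2/3) * H 0 3 2 * v 0 2 3 + (-2/3) * H 0 3 2 * v 0 3 2 + (2/3) * H 0 3 2 * v 2 3 0 + (-2/3) * H 1 2 0 * v 0 1 2 + (2/3) * H 1 2 0 * v 0 2 1 + (-2/3) * H 1 2 0 * v 1 2 0 + (-2/3) * H 1 3 0 * v 0 1 3 + (2/3) * H 1 3 0 * v 0 3 1 + (-2/3) * H 1 3 0 * v 1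 3 0 + (-2/3) * H 2 3 0 * v 0 2 3 + (2/3) * H 2 3 0 * v 0 3 2 + (-2/3) * H 2 3 0 * v 2 3 0 := by
    simp only [P3, up3_eq, asym_eq hH1, asym_eq hv1, Fin.sum_univ_four, eta00, eta11, eta22, eta33, hHd, hH1 1 0, hH1 2 0, hH1 3 0, hH1 2 1, hH1 3 1, hH1 3 2, sH121, sH122, sH123, sH131, sH132, sH133, sH231, sH232, sH233, hvd, hv1 1 0, hv1 2 0, hv1 3 0, hv1 2 1, hv1 3 1, hv1 3 2, sv121, sv122, sv123, sv131, sv132, sv133, sv231, sv232, sv233]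
    ring
  have A6 : P3 v H = (-2/3) * H 0 1 2 * v 0 1 2 + (2/3) * H 0 1 2 * v 0 2 1 + (-2/3) * H 0 1 2 * v 1 2 0 + (-2/3) * H 0 1 3 * v 0 1 3 + (2/3) * H 0 1 3 * v 0 3 1 + (-2/3) * H 0 1 3 * v 1 3 0 + (2/3) * H 0 2 1 * v 0 1 2 + (-2/3) * H 0 2 1 * v 0 2 1 + (2/3) * H 0 2 1 * v 1 2 0 + (-2/3) * H 0 2 3 * v 0 2 3 + (2/3) * H 0 2 3 * v 0 3 2 + (-2/3) * H 0 2 3 * v 2 3 0 + (2/3) * H 0 3 1 * v 0 1 3 + (-2/3) * H 0 3 1 * v 0 3 1 + (2/3) * H 0 3 1 * v 1 3 0 + (2/3) * H 0 3 2 * v 0 2 3 + (-2/3) * H 0 3 2 * v 0 3 2 + (2/3) * H 0 3 2 * v 2 3 0 + (-2/3) * H 1 2 0 * v 0 1 2 + (2/3) * H 1 2 0 * v 0 2 1 + (-2/3) * H 1 2 0 * v 1 2 0 + (-2/3) * H 1 3 0 * v 0 1 3 + (2/3) * H 1 3 0 * v 0 3 1 + (-2/3) * H 1 3 0 * v 1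 3 0 + (-2/3) * H 2 3 0 * v 0 2 3 + (2/3) * H 2 3 0 * v 0 3 2 + (-2/3) * H 2 3 0 * v 2 3 0 := by
    simp only [P3, up3_eq, asym_eq hH1, asym_eq hv1, Fin.sum_univ_four, eta00, eta11, eta22, eta33, hHd, hH1 1 0, hH1 2 0, hH1 3 0, hH1 2 1, hH1 3 1, hH1 3 2, sH121, sH122, sH123, sH131, sH132, sH133, sH231, sH232, sH233, hvd, hv1 1 0, hv1 2 0, hv1 3 0, hv1 2 1, hv1 3 1, hv1 3 2, sv121, sv122, sv123, sv131, sv132, sv133, sv231, sv232, sv233]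
    ring
  have A7 : P1 v K = 1 * K 0 1 0 * v 0 1 0 + (-1) * K 0 1 1 * v 0 1 1 + (-1) * K 0 1 2 * v 0 2 1 + 1 * K 0 1 2 * v 1 2 0 + (-1) * K 0 1 3 * v 0 3 1 + 1 * K 0 1 3 * v 1 3 0 + 1 * K 0 2 0 * v 0 2 0 + (-1) * K 0 2 1 * v 0 1 2 + (-1) * K 0 2 1 * v 1 2 0 + (-1) * K 0 2 2 * v 0 2 2 + (-1) * K 0 2 3 * v 0 3 2 + 1 * K 0 2 3 * v 2 3 0 + 1 * K 0 3 0 * v 0 3 0 + (-1) * K 0 3 1 * v 0 1 3 + (-1) * K 0 3 1 * v 1 3 0 + (-1) * K 0 3 2 * v 0 2 3 + (-1) * K 0 3 2 * v 2 3 0 + (-1) * K 0 3 3 * v 0 3 3 + 1 * K 1 2 0 * v 0 1 2 + (-1) * K 1 2 0 * v 0 2 1 + 1 * K 1 3 0 * v 0 1 3 + (-1) * K 1 3 0 * v 0 3 1 + 1 * K 2 3 0 * v 0 2 3 + (-1) * K 2 3 0 * v 0 3 2 := by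
    simp only [P1, up3_eq, Fin.sum_univ_four, eta00, eta11, eta22, eta33, hvd, hv1 1 0, hv1 2 0, hv1 3 0, hv1 2 1, hv1 3 1, hv1 3 2, sv121, sv122, sv123, sv131, sv132, sv133, sv231, sv232, sv233, hKd, hK 1 0, hK 2 0, hK 3 0, hK 2 1, hK 3 1, hK 3 2]
    ring
  have A8 : P2 v K = (-1) * K 0 1 0 * v 0 1 0 + 1 * K 0 1 1 * v 0 1 1 + 1 * K 0 1 1 * v 0 2 2 + 1 * K 0 1 1 * v 0 3 3 + (-1) * K 0 2 0 * v 0 2 0 + 1 * K 0 2 2 * v 0 1 1 + 1 * K 0 2 2 * v 0 2 2 + 1 * K 0 2 2 * v 0 3 3 + (-1) * K 0 3 0 * v 0 3 0 + 1 * K 0 3 3 * v 0 1 1 + 1 * K 0 3 3 * v 0 2 2 + 1 * K 0 3 3 * v 0 3 3 + 1 * K 1 2 1 * v 0 2 0 + (-1) * K 1 2 2 * v 0 1 0 + 1 * K 1 3 1 * v 0 3 0 + (-1) * K 1 3 3 * v 0 1 0 + 1 * K 2 3 2 * v 0 3 0 + (-1) * K 2 3 3 * v 0 2 0 := by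
    simp only [P2, tr1_eq, tr2_eq, Fin.sum_univ_four, eta00, eta11, eta22, eta33, hvd, hv1 1 0, hv1 2 0, hv1 3 0, hv1 2 1, hv1 3 1, hv1 3 2, sv121, sv122, sv123, sv131, sv132, sv133, sv231, sv232, sv233, hKd, hK 1 0, hK 2 0, hK 3 0, hK 2 1, hK 3 1, hK 3 2]
    ring
  have A9 : P3 v K = (-2/3) * K 0 1 2 * v 0 1 2 + (2/3) * K 0 1 2 * v 0 2 1 + (-2/3) * K 0 1 2 * v 1 2 0 + (-2/3) * K 0 1 3 * v 0 1 3 + (2/3) * K 0 1 3 * v 0 3 1 + (-2/3) * K 0 1 3 * v 1 3 0 + (2/3) * K 0 2 1 * v 0 1 2 + (-2/3) * K 0 2 1 * v 0 2 1 + (2/3) * K 0 2 1 * v 1 2 0 + (-2/3) * K 0 2 3 * v 0 2 3 + (2/3) * K 0 2 3 * v 0 3 2 + (-2/3) * K 0 2 3 * v 2 3 0 + (2/3) * K 0 3 1 * v 0 1 3 + (-2/3) * K 0 3 1 * v 0 3 1 + (2/3) * K 0 3 1 * v 1 3 0 + (2/3) * K 0 3 2 * v 0 2 3 + (-2/3)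 * K 0 3 2 * v 0 3 2 + (2/3) * K 0 3 2 * v 2 3 0 + (-2/3) * K 1 2 0 * v 0 1 2 + (2/3) * K 1 2 0 * v 0 2 1 + (-2/3) * K 1 2 0 * v 1 2 0 + (-2/3) * K 1 3 0 * v 0 1 3 + (2/3) * K 1 3 0 * v 0 3 1 + (-2/3) * K 1 3 0 * v 1 3 0 + (-2/3) * K 2 3 0 * v 0 2 3 + (2/3) * K 2 3 0 * v 0 3 2 + (-2/3) * K 2 3 0 * v 2 3 0 := by
    simp only [P3, up3_eq, asym_eq hv1, asym_eq hK, Fin.sum_univ_four, eta00, eta11, eta22, eta33, hvd, hv1 1 0, hv1 2 0, hv1 3 0, hv1 2 1, hv1 3 1, hv1 3 2, sv121, sv122, sv123, sv131, sv132, sv133, sv231, sv232, sv233, hKd, hK 1 0, hK 2 0, hK 3 0, hK 2 1, hK 3 1, hK 3 2]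
    ring
  have A10 : Sf τ v = (-2) * τ 0 1 2 * v 0 1 2 + 2 * τ 0 1 2 * v 0 2 1 + (-2) * τ 0 1 2 * v 1 2 0 + (-2) * τ 0 1 3 * v 0 1 3 + 2 * τ 0 1 3 * v 0 3 1 + (-2) * τ 0 1 3 * v 1 3 0 + (-2) * τ 0 2 3 * v 0 2 3 + 2 * τ 0 2 3 * v 0 3 2 + (-2) * τ 0 2 3 * v 2 3 0 := by
    simp only [Sf, up3_eq, Fin.sum_univ_four, eta00, eta11, eta22, eta33, hvd, hv1 1 0, hv1 2 0, hv1 3 0, hv1 2 1, hv1 3 1, hv1 3 2, sv121, sv122, sv123, sv131, sv132, sv133, sv231, sv232, sv233, hτd1, hτd2, hτ1 1 0, hτ1 2 0, hτ1 3 0, hτ1 2 1, hτ1 3 1, hτ1 3 2, ht10, ht20, ht30, ht21, ht31, ht32]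
    ring
  unfold DV Bf
  rw [A1, A2, A3, A4, A5, A6, A7, A8, A9, A10]
  simp only [CM1, CE11, CE12, CE13, CM2, CE21, CE22, CE23, CM3, CE31, CE32, CE33, CB12, CB13, CB23]
  ring

def dlt (x y : Idx) : ℝ := if x = y then 1 else 0

def Ebas (i j : Fin 3) : T3 :=
  fun a b c => (dlt a 0 * dlt b i.succ - dlt a i.succ * dlt b 0) * dlt c j.succ
def Bbas (i j : Fin 3) : T3 :=
  fun a b c => (dlt a i.succ * dlt b j.succ - dlt a j.succ * dlt b i.succ) * dlt c 0
def Mbas (i : Fin 3) : T3 :=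
  fun a b c => (dlt a 0 * dlt b i.succ - dlt a i.succ * dlt b 0) * dlt c 0

lemma Ebas_anti (i j : Fin 3) : ∀ a b c, Ebas i j a b c = -Ebas i j b a c := by
  intro a b c; simp only [Ebas]; ring
lemma Ebas_spat (i j : Fin 3) : ∀ x y z : Fin 3, Ebas i j x.succ y.succ z.succ = 0 := by
  intro x y z; simp [Ebas, dlt, Fin.succ_ne_zero]
lemma Ebas_mem (i j : Fin 3) : Ebas i j ∈ W0 := ⟨Ebas_anti i j, Ebas_spat i j⟩
lemma Bbas_anti (i j : Fin 3) : ∀ a b c, Bbas i j a b c = -Bbas i j b a c := by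
  intro a b c; simp only [Bbas]; ring
lemma Bbas_spat (i j : Fin 3) : ∀ x y z : Fin 3, Bbas i j x.succ y.succ z.succ = 0 := by
  intro x y z; simp [Bbas, dlt, Fin.succ_ne_zero]
lemma Bbas_mem (i j : Fin 3) : Bbas i j ∈ W0 := ⟨Bbas_anti i j, Bbas_spat i j⟩
lemma Mbas_anti (i : Fin 3) : ∀ a b c, Mbas i a b c = -Mbas i b a c := by
  intro a b c; simp only [Mbas]; ring
lemma Mbas_spat (i : Fin 3) : ∀ x y z : Fin 3, Mbas i x.succ y.succ z.succ = 0 := by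
  intro x y z; simp [Mbas, dlt, Fin.succ_ne_zero]
lemma Mbas_mem (i : Fin 3) : Mbas i ∈ W0 := ⟨Mbas_anti i, Mbas_spat i⟩

lemma eqs_iff (lam g : ℝ) (K τ H : T3)
    (hK : ∀ a b c, K a b c = -K b a c)
    (hτ1 : ∀ a b c, τ a b c = -τ b a c) (hτ2 : ∀ a b c, τ a b c = -τ a c b)
    (hH1 : ∀ a b c, H a b c = -H b a c) (hH2 : ∀ i j k : Fin 3, H i.succ j.succ k.succ = 0) :
    (∀ v : W0, DV lam g K τ H (v : T3) = 0) ↔ Eqs lam g K τ H := by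
  constructor
  · intro h
    refine ⟨?_, ?_, ?_, ?_, ?_, ?_, ?_, ?_, ?_, ?_, ?_, ?_, ?_, ?_, ?_⟩
    · have hv : DV lam g K τ H (Mbas 0) = 0 := h ⟨Mbas 0, Mbas_mem 0⟩
      rw [Dval lam g K τ H (Mbas 0) hK hτ1 hτ2 hH1 hH2 (Mbas_anti 0) (Mbas_spat 0)] at hv
      simpa [Mbas, dlt, fs0, fs1, fs2] using hv
    · have hv : DV lam g K τ H (Ebas 0 0) = 0 := h ⟨Ebas 0 0, Ebas_mem 0 0⟩
      rw [Dval lam g K τ H (Ebas 0 0) hK hτ1 hτ2 hH1 hH2 (Ebas_anti 0 0) (Ebas_spat 0 0)] at hv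
      simpa [Ebas, dlt, fs0, fs1, fs2] using hv
    · have hv : DV lam g K τ H (Ebas 0 1) = 0 := h ⟨Ebas 0 1, Ebas_mem 0 1⟩
      rw [Dval lam g K τ H (Ebas 0 1) hK hτ1 hτ2 hH1 hH2 (Ebas_anti 0 1) (Ebas_spat 0 1)] at hv
      simpa [Ebas, dlt, fs0, fs1, fs2] using hv
    · have hv : DV lam g K τ H (Ebas 0 2) = 0 := h ⟨Ebas 0 2, Ebas_mem 0 2⟩
      rw [Dval lam g K τ H (Ebas 0 2) hK hτ1 hτ2 hH1 hH2 (Ebas_anti 0 2) (Ebas_spat 0 2)] at hv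
      simpa [Ebas, dlt, fs0, fs1, fs2] using hv
    · have hv : DV lam g K τ H (Mbas 1) = 0 := h ⟨Mbas 1, Mbas_mem 1⟩
      rw [Dval lam g K τ H (Mbas 1) hK hτ1 hτ2 hH1 hH2 (Mbas_anti 1) (Mbas_spat 1)] at hv
      simpa [Mbas, dlt, fs0, fs1, fs2] using hv
    · have hv : DV lam g K τ H (Ebas 1 0) = 0 := h ⟨Ebas 1 0, Ebas_mem 1 0⟩
      rw [Dval lam g K τ H (Ebas 1 0) hK hτ1 hτ2 hH1 hH2 (Ebas_anti 1 0) (Ebas_spat 1 0)] at hv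
      simpa [Ebas, dlt, fs0, fs1, fs2] using hv
    · have hv : DV lam g K τ H (Ebas 1 1) = 0 := h ⟨Ebas 1 1, Ebas_mem 1 1⟩
      rw [Dval lam g K τ H (Ebas 1 1) hK hτ1 hτ2 hH1 hH2 (Ebas_anti 1 1) (Ebas_spat 1 1)] at hv
      simpa [Ebas, dlt, fs0, fs1, fs2] using hv
    · have hv : DV lam g K τ H (Ebas 1 2) = 0 := h ⟨Ebas 1 2, Ebas_mem 1 2⟩
      rw [Dval lam g K τ H (Ebas 1 2) hK hτ1 hτ2 hH1 hH2 (Ebas_anti 1 2) (Ebas_spat 1 2)] at hv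
      simpa [Ebas, dlt, fs0, fs1, fs2] using hv
    · have hv : DV lam g K τ H (Mbas 2) = 0 := h ⟨Mbas 2, Mbas_mem 2⟩
      rw [Dval lam g K τ H (Mbas 2) hK hτ1 hτ2 hH1 hH2 (Mbas_anti 2) (Mbas_spat 2)] at hv
      simpa [Mbas, dlt, fs0, fs1, fs2] using hv
    · have hv : DV lam g K τ H (Ebas 2 0) = 0 := h ⟨Ebas 2 0, Ebas_mem 2 0⟩
      rw [Dval lam g K τ H (Ebas 2 0) hK hτ1 hτ2 hH1 hH2 (Ebas_anti 2 0) (Ebas_spat 2 0)] at hv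
      simpa [Ebas, dlt, fs0, fs1, fs2] using hv
    · have hv : DV lam g K τ H (Ebas 2 1) = 0 := h ⟨Ebas 2 1, Ebas_mem 2 1⟩
      rw [Dval lam g K τ H (Ebas 2 1) hK hτ1 hτ2 hH1 hH2 (Ebas_anti 2 1) (Ebas_spat 2 1)] at hv
      simpa [Ebas, dlt, fs0, fs1, fs2] using hv
    · have hv : DV lam g K τ H (Ebas 2 2) = 0 := h ⟨Ebas 2 2, Ebas_mem 2 2⟩
      rw [Dval lam g K τ H (Ebas 2 2) hK hτ1 hτ2 hH1 hH2 (Ebas_anti 2 2) (Ebas_spat 2 2)] at hv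
      simpa [Ebas, dlt, fs0, fs1, fs2] using hv
    · have hv : DV lam g K τ H (Bbas 0 1) = 0 := h ⟨Bbas 0 1, Bbas_mem 0 1⟩
      rw [Dval lam g K τ H (Bbas 0 1) hK hτ1 hτ2 hH1 hH2 (Bbas_anti 0 1) (Bbas_spat 0 1)] at hv
      simpa [Bbas, dlt, fs0, fs1, fs2] using hv
    · have hv : DV lam g K τ H (Bbas 0 2) = 0 := h ⟨Bbas 0 2, Bbas_mem 0 2⟩
      rw [Dval lam g K τ H (Bbas 0 2) hK hτ1 hτ2 hH1 hH2 (Bbas_anti 0 2) (Bbas_spat 0 2)] at hv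
      simpa [Bbas, dlt, fs0, fs1, fs2] using hv
    · have hv : DV lam g K τ H (Bbas 1 2) = 0 := h ⟨Bbas 1 2, Bbas_mem 1 2⟩
      rw [Dval lam g K τ H (Bbas 1 2) hK hτ1 hτ2 hH1 hH2 (Bbas_anti 1 2) (Bbas_spat 1 2)] at hv
      simpa [Bbas, dlt, fs0, fs1, fs2] using hv
  · rintro ⟨h1, h2, h3, h4, h5, h6, h7, h8, h9, h10, h11, h12, h13, h14, h15⟩ v
    have hv1 : ∀ a b c, (v : T3) a b c = -(v : T3) b a c := v.2.1
    have hv2 : ∀ i j k : Fin 3, (v : T3) i.succ j.succ k.succ = 0 := v.2.2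
    rw [Dval lam g K τ H (v : T3) hK hτ1 hτ2 hH1 hH2 hv1 hv2,
      h1, h2, h3, h4, h5, h6, h7, h8, h9, h10, h11, h12, h13, h14, h15]
    ring

set_option maxHeartbeats 1600000 in
lemma eqs_of_formulas (lam g : ℝ) (hlam : lam ≠ 1) (K τ H : T3)
    (hK : ∀ a b c, K a b c = -K b a c)
    (hτ2 : ∀ a b c, τ a b c = -τ a c b)
    (htr : ∀ i : Fin 3, (∑ j : Fin 3, K i.succ j.succ j.succ) = 0)
    (hF : ∀ i j : Fin 3,
      H 0 i.succ j.succ = K 0 i.succ j.succ + (g / (lam - 1)) * τ 0 i.succ j.succ ∧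
      H i.succ j.succ 0 = K i.succ j.succ 0 + (g / (lam - 1)) * τ 0 i.succ j.succ) :
    Eqs lam g K τ H := by
  have hlam1 : lam - 1 ≠ 0 := sub_ne_zero.mpr hlam
  have hc : (lam - 1) * (g / (lam - 1)) = g := by field_simp
  have hKd : ∀ a c, K a a c = 0 := fun a c => by have := hK a a c; linarith
  have τdd : ∀ a b, τ a b b = 0 := fun a b => by have := hτ2 a b b; linarith
  have t021 : τ 0 2 1 = -τ 0 1 2 := hτ2 0 2 1
  have t031 : τ 0 3 1 = -τ 0 1 3 := hτ2 0 3 1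
  have t032 : τ 0 3 2 = -τ 0 2 3 := hτ2 0 3 2
  have b11 : H 0 1 1 = K 0 1 1 := by
    have hb : H 0 1 1 = K 0 1 1 + g / (lam - 1) * τ 0 1 1 := (hF 0 0).1
    rw [τdd 0 1] at hb
    linarith
  have b12 : H 0 1 2 = K 0 1 2 + g / (lam - 1) * τ 0 1 2 := (hF 0 1).1
  have b13 : H 0 1 3 = K 0 1 3 + g / (lam - 1) * τ 0 1 3 := (hF 0 2).1
  have b21 : H 0 2 1 = K 0 2 1 - g / (lam - 1) * τ 0 1 2 := by
    have hb : H 0 2 1 = K 0 2 1 + g / (lam - 1) * τ 0 2 1 := (hF 1 0).1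
    rw [t021] at hb
    linarith
  have b22 : H 0 2 2 = K 0 2 2 := by
    have hb : H 0 2 2 = K 0 2 2 + g / (lam - 1) * τ 0 2 2 := (hF 1 1).1
    rw [τdd 0 2] at hb
    linarith
  have b23 : H 0 2 3 = K 0 2 3 + g / (lam - 1) * τ 0 2 3 := (hF 1 2).1
  have b31 : H 0 3 1 = K 0 3 1 - g / (lam - 1) * τ 0 1 3 := by
    have hb : H 0 3 1 = K 0 3 1 + g / (lam - 1) * τ 0 3 1 := (hF 2 0).1
    rw [t031] at hb
    linarith
  have b32 : H 0 3 2 = K 0 3 2 - g / (lam - 1) * τ 0 2 3 := by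
    have hb : H 0 3 2 = K 0 3 2 + g / (lam - 1) * τ 0 3 2 := (hF 2 1).1
    rw [t032] at hb
    linarith
  have b33 : H 0 3 3 = K 0 3 3 := by
    have hb : H 0 3 3 = K 0 3 3 + g / (lam - 1) * τ 0 3 3 := (hF 2 2).1
    rw [τdd 0 3] at hb
    linarith
  have c12 : H 1 2 0 = K 1 2 0 + g / (lam - 1) * τ 0 1 2 := (hF 0 1).2
  have c13 : H 1 3 0 = K 1 3 0 + g / (lam - 1) * τ 0 1 3 := (hF 0 2).2
  have c23 : H 2 3 0 = K 2 3 0 + g / (lam - 1) * τ 0 2 3 := (hF 1 2).2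
  have htr1 : K 1 1 1 + K 1 2 2 + K 1 3 3 = 0 := by
    simpa [Fin.sum_univ_three, fs0, fs1, fs2] using htr 0
  have htr2 : K 2 1 1 + K 2 2 2 + K 2 3 3 = 0 := by
    simpa [Fin.sum_univ_three, fs0, fs1, fs2] using htr 1
  have htr3 : K 3 1 1 + K 3 2 2 + K 3 3 3 = 0 := by
    simpa [Fin.sum_univ_three, fs0, fs1, fs2] using htr 2
  refine ⟨?_, ?_, ?_, ?_, ?_, ?_, ?_, ?_, ?_, ?_, ?_, ?_, ?_, ?_, ?_⟩
  · simp only [CM1]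
    linarith [htr1, hKd 1 1]
  · simp only [CE11]
    linear_combination (2) * b22 + (2) * b33
  · simp only [CE12]
    linear_combination ((-2) + (4/3) * lam) * b21 + (2 + (-4/3) * lam) * c12 + ((-4/3) * lam) * b12 + ((-4) * τ 0 1 2) * hc
  · simp only [CE13]
    linear_combination ((-2) + (4/3) * lam) * b31 + (2 + (-4/3) * lam) * c13 + ((-4/3) * lam) * b13 + ((-4) * τ 0 1 3) * hc
  · simp only [CM2]
    linarith [htr2, hKd 2 2, hK 2 1 1]
  · simp only [CE21]
    linear_combination ((-2) + (4/3) * lam) * b12 + ((-2) + (4/3) * lam) * c12 + ((-4/3) * lam) * b21 + (4 * τ 0 1 2) * hc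
  · simp only [CE22]
    linear_combination (2) * b11 + (2) * b33
  · simp only [CE23]
    linear_combination ((-2) + (4/3) * lam) * b32 + (2 + (-4/3) * lam) * c23 + ((-4/3) * lam) * b23 + ((-4) * τ 0 2 3) * hc
  · simp only [CM3]
    linarith [htr3, hKd 3 3, hK 3 1 1, hK 3 2 2]
  · simp only [CE31]
    linear_combination ((-2) + (4/3) * lam) * b13 + ((-2) + (4/3) * lam) * c13 + ((-4/3) * lam) * b31 + (4 * τ 0 1 3) * hc
  · simp only [CE32]
    linear_combination ((-2) + (4/3) * lam) * b23 + ((-2) + (4/3) * lam) * c23 + ((-4/3) * lam) * b32 + (4 * τ 0 2 3) * hc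
  · simp only [CE33]
    linear_combination (2) * b11 + (2) * b22
  · simp only [CB12]
    linear_combination (2 + (-4/3) * lam) * b12 + ((-2) + (4/3) * lam) * b21 + ((-4/3) * lam) * c12 + ((-4) * τ 0 1 2) * hc
  · simp only [CB13]
    linear_combination (2 + (-4/3) * lam) * b13 + ((-2) + (4/3) * lam) * b31 + ((-4/3) * lam) * c13 + ((-4) * τ 0 1 3) * hc
  · simp only [CB23]
    linear_combination (2 + (-4/3) * lam) * b23 + ((-2) + (4/3) * lam) * b32 + ((-4/3) * lam) * c23 + ((-4) * τ 0 2 3) * hc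

set_option maxHeartbeats 1600000 in
lemma formulas_of_eqs (lam g : ℝ) (hlam : lam ≠ 1) (K τ H : T3)
    (hK : ∀ a b c, K a b c = -K b a c)
    (hτ2 : ∀ a b c, τ a b c = -τ a c b)
    (hH1 : ∀ a b c, H a b c = -H b a c)
    (he : Eqs lam g K τ H) :
    ∀ i j : Fin 3,
      H 0 i.succ j.succ = K 0 i.succ j.succ + (g / (lam - 1)) * τ 0 i.succ j.succ ∧
      H i.succ j.succ 0 = K i.succ j.succ 0 + (g / (lam - 1)) * τ 0 i.succ j.succ := by
  obtain ⟨hm1, h11, h12, h13, hm2, h21, h22, h23, hm3, h31, h32, h33, hb12, hb13, hb23⟩ := he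
  simp only [CM1, CE11, CE12, CE13, CM2, CE21, CE22, CE23, CM3, CE31, CE32, CE33, CB12, CB13, CB23] at hm1 h11 h12 h13 hm2 h21 h22 h23 hm3 h31 h32 h33 hb12 hb13 hb23
  have hlam1 : lam - 1 ≠ 0 := sub_ne_zero.mpr hlam
  have hc : (lam - 1) * (g / (lam - 1)) = g := by field_simp
  have hHd : ∀ a c, H a a c = 0 := fun a c => by have := hH1 a a c; linarith
  have hKd : ∀ a c, K a a c = 0 := fun a c => by have := hK a a c; linarith
  have τdd : ∀ a b, τ a b b = 0 := fun a b => by have := hτ2 a b b; linarith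
  have t021 : τ 0 2 1 = -τ 0 1 2 := hτ2 0 2 1
  have t031 : τ 0 3 1 = -τ 0 1 3 := hτ2 0 3 1
  have t032 : τ 0 3 2 = -τ 0 2 3 := hτ2 0 3 2
  have f011 : H 0 1 1 = K 0 1 1 := by linear_combination (-(1/4)) * h11 + (1/4) * h22 + (1/4) * h33
  have f022 : H 0 2 2 = K 0 2 2 := by linear_combination (1/4) * h11 + (-(1/4)) * h22 + (1/4) * h33
  have f033 : H 0 3 3 = K 0 3 3 := by linear_combination (1/4) * h11 + (1/4) * h22 + (-(1/4)) * h33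
  have k12a : (lam - 1) * H 0 1 2 = (lam - 1) * K 0 1 2 + g * τ 0 1 2 := by
    linear_combination (1/4 - (1/3) * lam) * h12 + (1/4 - (1/6) * lam) * h21 + (-(1/4) + (1/6) * lam) * hb12
  have k12b : (lam - 1) * H 0 2 1 = (lam - 1) * K 0 2 1 - g * τ 0 1 2 := by
    linear_combination (1/4 - (1/6) * lam) * h12 + (1/4 - (1/3) * lam) * h21 + (1/4 - (1/6) * lam) * hb12
  have k12c : (lam - 1) * H 1 2 0 = (lam - 1) * K 1 2 0 + g * τ 0 1 2 := by
    linear_combination (-(1/4) + (1/6) * lam) * h12 + (1/4 - (1/6) * lam) * h21 + (1/4 - (1/3) * lam) * hb12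
  have f012 : H 0 1 2 = K 0 1 2 + g / (lam - 1) * τ 0 1 2 :=
    mul_left_cancel₀ hlam1 (by linear_combination k12a - τ 0 1 2 * hc)
  have f021 : H 0 2 1 = K 0 2 1 - g / (lam - 1) * τ 0 1 2 :=
    mul_left_cancel₀ hlam1 (by linear_combination k12b + τ 0 1 2 * hc)
  have f120 : H 1 2 0 = K 1 2 0 + g / (lam - 1) * τ 0 1 2 :=
    mul_left_cancel₀ hlam1 (by linear_combination k12c - τ 0 1 2 * hc)
  have k13a : (lam - 1) * H 0 1 3 = (lam - 1) * K 0 1 3 + g * τ 0 1 3 := by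
    linear_combination (1/4 - (1/3) * lam) * h13 + (1/4 - (1/6) * lam) * h31 + (-(1/4) + (1/6) * lam) * hb13
  have k13b : (lam - 1) * H 0 3 1 = (lam - 1) * K 0 3 1 - g * τ 0 1 3 := by
    linear_combination (1/4 - (1/6) * lam) * h13 + (1/4 - (1/3) * lam) * h31 + (1/4 - (1/6) * lam) * hb13
  have k13c : (lam - 1) * H 1 3 0 = (lam - 1) * K 1 3 0 + g * τ 0 1 3 := by
    linear_combination (-(1/4) + (1/6) * lam) * h13 + (1/4 - (1/6) * lam) * h31 + (1/4 - (1/3) * lam) * hb13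
  have f013 : H 0 1 3 = K 0 1 3 + g / (lam - 1) * τ 0 1 3 :=
    mul_left_cancel₀ hlam1 (by linear_combination k13a - τ 0 1 3 * hc)
  have f031 : H 0 3 1 = K 0 3 1 - g / (lam - 1) * τ 0 1 3 :=
    mul_left_cancel₀ hlam1 (by linear_combination k13b + τ 0 1 3 * hc)
  have f130 : H 1 3 0 = K 1 3 0 + g / (lam - 1) * τ 0 1 3 :=
    mul_left_cancel₀ hlam1 (by linear_combination k13c - τ 0 1 3 * hc)
  have k23a : (lam - 1) * H 0 2 3 = (lam - 1) * K 0 2 3 + g * τ 0 2 3 := by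
    linear_combination (1/4 - (1/3) * lam) * h23 + (1/4 - (1/6) * lam) * h32 + (-(1/4) + (1/6) * lam) * hb23
  have k23b : (lam - 1) * H 0 3 2 = (lam - 1) * K 0 3 2 - g * τ 0 2 3 := by
    linear_combination (1/4 - (1/6) * lam) * h23 + (1/4 - (1/3) * lam) * h32 + (1/4 - (1/6) * lam) * hb23
  have k23c : (lam - 1) * H 2 3 0 = (lam - 1) * K 2 3 0 + g * τ 0 2 3 := by
    linear_combination (-(1/4) + (1/6) * lam) * h23 + (1/4 - (1/6) * lam) * h32 + (1/4 - (1/3) * lam) * hb23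
  have f023 : H 0 2 3 = K 0 2 3 + g / (lam - 1) * τ 0 2 3 :=
    mul_left_cancel₀ hlam1 (by linear_combination k23a - τ 0 2 3 * hc)
  have f032 : H 0 3 2 = K 0 3 2 - g / (lam - 1) * τ 0 2 3 :=
    mul_left_cancel₀ hlam1 (by linear_combination k23b + τ 0 2 3 * hc)
  have f230 : H 2 3 0 = K 2 3 0 + g / (lam - 1) * τ 0 2 3 :=
    mul_left_cancel₀ hlam1 (by linear_combination k23c - τ 0 2 3 * hc)
  clear hm1 h11 h12 h13 hm2 h21 h22 h23 hm3 h31 h32 h33 hb12 hb13 hb23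
  intro i j
  fin_cases i <;> fin_cases j <;>
    refine ⟨?_, ?_⟩ <;>
    · simp only [show (⟨0, by omega⟩ : Fin 3).succ = (1 : Idx) from rfl, show (⟨1, by omega⟩ : Fin 3).succ = (2 : Idx) from rfl, show (⟨2, by omega⟩ : Fin 3).succ = (3 : Idx) from rfl, fs0, fs1, fs2, t021, t031, t032, τdd, hHd, hKd,
        hH1 2 1, hH1 3 1, hH1 3 2, hK 2 1, hK 3 1, hK 3 2]
      linarith [f011, f022, f033, f012, f021, f120, f013, f031, f130, f023, f032, f230]

lemma trace_of_eqs (lam g : ℝ) (K τ H : T3)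
    (hK : ∀ a b c, K a b c = -K b a c)
    (he : Eqs lam g K τ H) :
    ∀ i : Fin 3, (∑ j : Fin 3, K i.succ j.succ j.succ) = 0 := by
  obtain ⟨hm1, -, -, -, hm2, -, -, -, hm3, -, -, -, -, -, -⟩ := he
  simp only [CM1] at hm1
  simp only [CM2] at hm2
  simp only [CM3] at hm3
  have hKd : ∀ a c, K a a c = 0 := fun a c => by have := hK a a c; linarith
  intro i
  fin_cases i <;>
  · simp only [Fin.sum_univ_three, show (⟨0, by omega⟩ : Fin 3).succ = (1 : Idx) from rfl, show (⟨1, by omega⟩ : Fin 3).succ = (2 : Idx) from rfl, show (⟨2, by omega⟩ : Fin 3).succ = (3 : Idx) from rfl, fs0, fs1, fs2, hKd, hK 2 1, hK 3 1, hK 3 2]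
    linarith [hm1, hm2, hm3]

def Hopt (lam g : ℝ) (K τ : T3) : T3 := fun a b c =>
  if (a = 0 ∧ b ≠ 0 ∧ c ≠ 0) ∨ (b = 0 ∧ a ≠ 0 ∧ c ≠ 0) ∨ (c = 0 ∧ a ≠ 0 ∧ b ≠ 0)
  then K a b c + (g / (lam - 1)) * τ a b c else 0

lemma Hopt_anti (lam g : ℝ) (K τ : T3)
    (hK : ∀ a b c, K a b c = -K b a c) (hτ1 : ∀ a b c, τ a b c = -τ b a c) :
    ∀ a b c, Hopt lam g K τ a b c = -Hopt lam g K τ b a c := by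
  intro a b c
  simp only [Hopt]
  split_ifs with h1 h2 <;>
    first
      | linear_combination hK a b c + (g / (lam - 1)) * hτ1 a b c
      | tauto
      | ring

lemma Hopt_spat (lam g : ℝ) (K τ : T3) :
    ∀ x y z : Fin 3, Hopt lam g K τ x.succ y.succ z.succ = 0 := by
  intro x y z; simp [Hopt, Fin.succ_ne_zero]

lemma Hopt_mem (lam g : ℝ) (K τ : T3)
    (hK : ∀ a b c, K a b c = -K b a c) (hτ1 : ∀ a b c, τ a b c = -τ b a c) :
    Hopt lam g K τ ∈ W0 :=
  ⟨Hopt_anti lam g K τ hK hτ1, Hopt_spat lam g K τ⟩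

lemma Hopt_F (lam g : ℝ) (K τ : T3)
    (hτ1 : ∀ a b c, τ a b c = -τ b a c) (hτ2 : ∀ a b c, τ a b c = -τ a c b) :
    ∀ i j : Fin 3,
      Hopt lam g K τ 0 i.succ j.succ
        = K 0 i.succ j.succ + (g / (lam - 1)) * τ 0 i.succ j.succ ∧
      Hopt lam g K τ i.succ j.succ 0
        = K i.succ j.succ 0 + (g / (lam - 1)) * τ 0 i.succ j.succ := by
  intro i j
  have hτc : ∀ a b c, τ a b c = τ c a b := fun a b c => by
    rw [hτ2 a b c, hτ1 a c b]; ring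
  constructor
  · simp [Hopt, Fin.succ_ne_zero]
  · have ht : τ i.succ j.succ 0 = τ 0 i.succ j.succ := hτc i.succ j.succ 0
    simp [Hopt, Fin.succ_ne_zero, ht]


/-- Coupling to the totally antisymmetric spin angular momentum `τ`:
for λ ≠ 1 and a nonzero gravitational coupling `g`, the functional
`f(H) = q(H) − 2g H^{abc} τ_{abc}` on the constraint subspace `W₀` has a critical point
iff `Σⱼ K_{ijj} = 0` for each spatial `i`; in that case `H ∈ W₀` is a critical point iff
`H_{0ij} = K_{0ij} + (g/(λ−1)) τ_{0ij}` and `H_{ij0} = K_{ij0} + (g/(λ−1)) τ_{0ij}` for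
all spatial `i,j` (the components `H_{0i0}` being arbitrary). -/
theorem statement17 (lam : ℝ) (hlam : lam ≠ 1) (g : ℝ) (hg : g ≠ 0)
    (K : T3) (hK : ∀ a b c, K a b c = -K b a c)
    (τ : T3) (hτ1 : ∀ a b c, τ a b c = -τ b a c) (hτ2 : ∀ a b c, τ a b c = -τ a c b) :
    ((∃ H : W0, fderiv ℝ (fun H : W0 =>
        qfun lam K (H : T3) - 2 * g * ∑ a, ∑ b, ∑ c, up3 (H : T3) a b c * τ a b c) H = 0) ↔
      ∀ i : Fin 3, (∑ j : Fin 3, K i.succ j.succ j.succ) = 0) ∧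
    ((∀ i : Fin 3, (∑ j : Fin 3, K i.succ j.succ j.succ) = 0) →
      ∀ H : W0, (fderiv ℝ (fun H : W0 =>
          qfun lam K (H : T3) - 2 * g * ∑ a, ∑ b, ∑ c, up3 (H : T3) a b c * τ a b c) H = 0 ↔
        ∀ i j : Fin 3,
          (H : T3) 0 i.succ j.succ = K 0 i.succ j.succ + (g / (lam - 1)) * τ 0 i.succ j.succ ∧
          (H : T3) i.succ j.succ 0 = K i.succ j.succ 0 + (g / (lam - 1)) * τ 0 i.succ j.succ)) := by
  have hcrit : ∀ H : W0, (fderiv ℝ (fun H : W0 =>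
      qfun lam K (H : T3) - 2 * g * ∑ a, ∑ b, ∑ c, up3 (H : T3) a b c * τ a b c) H = 0) ↔
      Eqs lam g K τ (H : T3) := fun H =>
    (crit_iff lam g K τ H).trans (eqs_iff lam g K τ (H : T3) hK hτ1 hτ2 H.2.1 H.2.2)
  constructor
  · constructor
    · rintro ⟨H, hH⟩
      exact trace_of_eqs lam g K τ (H : T3) hK ((hcrit H).mp hH)
    · intro htr
      refine ⟨⟨Hopt lam g K τ, Hopt_mem lam g K τ hK hτ1⟩, (hcrit _).mpr ?_⟩
      exact eqs_of_formulas lam g hlam K τ _ hK hτ2 htr (Hopt_F lam g K τ hτ1 hτ2)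
  · intro htr H
    rw [hcrit H]
    constructor
    · intro he
      exact formulas_of_eqs lam g hlam K τ _ hK hτ2 H.2.1 he
    · intro hf
      exact eqs_of_formulas lam g hlam K τ _ hK hτ2 htr hf
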